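/- Let p be a prime with p ≠ 3, q = p^k with q ≡ 2 (mod 3), ω ∈ F_{q^2} of order 3, and Q, R, S powers of p. Let f(X) = X^{Q+R+S} B_1(X^{q-1}) with B_1 as in Theorem 1 (B_1 = C_1/β where C_1(X) = -ω(X^Q+ω^Q)(X^R+ω^R)(X^S+ω^S) + (ω^Q X^Q+1)(ω^R X^R+1)(ω^S X^S+1)). Then f is F_q-linearly equivalent to the map (x,y) ↦ (x^{Q+R+S}, y^{Q+R+S}) on F_q × F_q; consequently f permutes F_{q^2} if and only if gcd(Q+R+S, q-1) = 1. -/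

import Mathlib

open Polynomial

/-- Statement 19: for `q ≡ 2 (mod 3)`, the polynomial
`f(X) = X^{Q+R+S} B₁(X^{q-1})` of Theorem 1 (with `B₁ = C₁/β`) is
`F_q`-linearly equivalent to `(x,y) ↦ (x^{Q+R+S}, y^{Q+R+S})` on
`F_q × F_q`; consequently `f` permutes `F_{q^2}` iff
`gcd(Q+R+S, q-1) = 1`. Here `F_q = {c : F | c^q = c}` and an
`F_q`-isomorphism is encoded as a bijective additive `F_q`-homogeneous map. -/
theorem stmt19 (p k q : ℕ) (hp : p.Prime) (hp3 : p ≠ 3) (hk : 0 < k)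
    (hq : q = p ^ k) (hq3 : q % 3 = 2)
    (F : Type*) [Field F] [Fintype F] (hF : Fintype.card F = q ^ 2)
    (ω : F) (hω : orderOf ω = 3)
    (Q R S : ℕ) (hQ : ∃ i : ℕ, Q = p ^ i) (hR : ∃ i : ℕ, R = p ^ i)
    (hS : ∃ i : ℕ, S = p ^ i)
    (C₁ : Polynomial F)
    (hC₁ : C₁ =
      -(C ω) * ((X ^ Q + C (ω ^ Q)) * (X ^ R + C (ω ^ R)) * (X ^ S + C (ω ^ S)))
        + (C (ω ^ Q) * X ^ Q + 1) * (C (ω ^ R) * X ^ R + 1) *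
          (C (ω ^ S) * X ^ S + 1))
    (β : F)
    (hβ : β = if (Q + R + S) % 3 = 1 then ω ^ (Q + R) - ω ^ (S + 1)
      else ω ^ (Q + R + S) - ω) :
    (∃ η : F → F × F, ∃ ρ : F × F → F,
        Function.Injective η ∧
        Set.range η = {a : F × F | a.1 ^ q = a.1 ∧ a.2 ^ q = a.2} ∧
        (∀ x y : F, η (x + y) = η x + η y) ∧
        (∀ c x : F, c ^ q = c → η (c * x) = (c * (η x).1, c * (η x).2)) ∧
        Set.BijOn ρ {a : F × F | a.1 ^ q = a.1 ∧ a.2 ^ q = a.2} Set.univ ∧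
        (∀ a b : F × F, ρ (a + b) = ρ a + ρ b) ∧
        (∀ (c : F) (a : F × F), c ^ q = c → ρ (c * a.1, c * a.2) = c * ρ a) ∧
        (∀ x : F,
          x ^ (Q + R + S) * (β⁻¹ * C₁.eval (x ^ (q - 1))) =
            ρ ((η x).1 ^ (Q + R + S), (η x).2 ^ (Q + R + S)))) ∧
      (Function.Bijective
          (fun x : F => x ^ (Q + R + S) * (β⁻¹ * C₁.eval (x ^ (q - 1)))) ↔
        Nat.gcd (Q + R + S) (q - 1) = 1) := by
  classical
  haveI : Fact p.Prime := ⟨hp⟩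
  -- characteristic
  haveI hchar : CharP F p := by
    obtain ⟨n, hr, hcard⟩ := FiniteField.card F (ringChar F)
    have hdvd : ringChar F ∣ p ^ (k * 2) := by
      have : ringChar F ∣ Fintype.card F := by
        rw [hcard]; exact dvd_pow_self _ (by positivity)
      rwa [hF, hq, ← pow_mul] at this
    have hrp : ringChar F = p :=
      (Nat.prime_dvd_prime_iff_eq hr hp).mp (hr.dvd_of_dvd_pow hdvd)
    rw [← hrp]; exact ringChar.charP F
  have hq1 : 1 ≤ q := by rw [hq]; exact Nat.one_le_pow _ _ hp.pos
  have hq2 : 2 ≤ q := by omega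
  -- basic ω facts
  have hω3 : ω ^ 3 = 1 := by rw [← hω]; exact pow_orderOf_eq_one ω
  have hω0 : ω ≠ 0 := by
    intro h; rw [h] at hω3; norm_num at hω3
  have hω1 : ω ≠ 1 := by
    intro h; rw [h, orderOf_one] at hω; omega
  have hωpow : ∀ n : ℕ, ω ^ (n % 3) = ω ^ n := by
    intro n; rw [← hω]; exact pow_mod_orderOf ω n
  have hωsq1 : ω ^ 2 ≠ 1 := by
    intro h
    have := orderOf_dvd_of_pow_eq_one h
    rw [hω] at this
    omega
  have hωsqω : ω ^ 2 ≠ ω := by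
    intro h
    have h2 : ω * ω = ω * 1 := by rw [mul_one]; linear_combination h
    exact hω1 (mul_left_cancel₀ hω0 h2)
  have hinj3 : ∀ a b : ℕ, a < 3 → b < 3 → ω ^ a = ω ^ b → a = b := by
    have key : ∀ a b : ℕ, a < b → b < 3 → ω ^ a ≠ ω ^ b := by
      intro a b hab hb3 h
      have h1 : ω ^ a * ω ^ (b - a) = ω ^ a * 1 := by
        rw [mul_one, ← pow_add, Nat.add_sub_cancel' (le_of_lt hab)]
        exact h.symm
      have h2 : ω ^ (b - a) = 1 := mul_left_cancel₀ (pow_ne_zero _ hω0) h1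
      have h3 := orderOf_dvd_of_pow_eq_one h2
      rw [hω] at h3
      have h4 := Nat.le_of_dvd (by omega) h3
      omega
    intro a b ha hb hab
    rcases Nat.lt_trichotomy a b with h | h | h
    · exact absurd hab (key a b h hb)
    · exact h
    · exact absurd hab.symm (key b a h ha)
  -- frobenius
  have hfrobq : ∀ x y : F, (x + y) ^ q = x ^ q + y ^ q := by
    intro x y; rw [hq]; exact add_pow_char_pow x y p k
  have hfrobsub : ∀ x y : F, (x - y) ^ q = x ^ q - y ^ q := by
    intro x y; rw [hq]; exact sub_pow_char_pow x y k
  have hfrobT : ∀ T : ℕ, (∃ i, T = p ^ i) → ∀ x y : F, (x + y) ^ T = x ^ T + y ^ T := by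
    rintro T ⟨i, rfl⟩ x y; exact add_pow_char_pow x y p i
  have hqq : ∀ x : F, (x ^ q) ^ q = x := by
    intro x
    rw [← pow_mul, ← sq, ← hF]
    exact FiniteField.pow_card x
  have hωq : ω ^ q = ω ^ 2 := by
    rw [← hωpow q, hq3]
  have hω2q : (ω ^ 2) ^ q = ω := by
    rw [← pow_mul, ← hωpow (2 * q), show 2 * q % 3 = 1 by omega, pow_one]
  -- mod 3 facts
  have hpmod : p % 3 = 2 := by
    have h0 : p % 3 ≠ 0 := by
      intro h
      have : (3 : ℕ) ∣ p := Nat.dvd_of_mod_eq_zero h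
      rcases (Nat.Prime.eq_one_or_self_of_dvd hp 3 this) with h' | h' <;> omega
    have h1 : p % 3 ≠ 1 := by
      intro h
      have : q % 3 = 1 := by
        rw [hq, Nat.pow_mod, h, one_pow]
        omega
      omega
    omega
  have hT3 : ∀ T : ℕ, (∃ i, T = p ^ i) → T % 3 ≠ 0 := by
    rintro T ⟨i, rfl⟩ h
    have : (3 : ℕ) ∣ p ^ i := Nat.dvd_of_mod_eq_zero h
    have := (Nat.Prime.dvd_of_dvd_pow (by norm_num : Nat.Prime 3) this)
    omega
  -- β ≠ 0
  have hβne : β ≠ 0 := by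
    rw [hβ]
    split_ifs with h1
    · intro h
      have hSm := hT3 S hS
      have hmod : ((Q + R) % 3 + S % 3) % 3 = 1 := by
        conv at h1 => rw [Nat.add_mod]
        exact h1
      have hne : (Q + R) % 3 ≠ (S + 1) % 3 := by omega
      apply hne
      apply hinj3 _ _ (Nat.mod_lt _ (by norm_num)) (Nat.mod_lt _ (by norm_num))
      rw [hωpow, hωpow]
      exact sub_eq_zero.mp h
    · intro h
      have hne : (Q + R + S) % 3 ≠ 1 % 3 := by omega
      apply hne
      apply hinj3 _ _ (Nat.mod_lt _ (by norm_num)) (Nat.mod_lt _ (by norm_num))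
      rw [hωpow, hωpow, pow_one]
      exact sub_eq_zero.mp h
  have hsub : ω - ω ^ 2 ≠ 0 := sub_ne_zero.mpr (fun h => hωsqω h.symm)
  have hsub' : ω ^ 2 - ω ≠ 0 := sub_ne_zero.mpr hωsqω
  set N := Q + R + S with hN
  have hNpos : 0 < N := by
    obtain ⟨i, rfl⟩ := hQ
    have := Nat.one_le_pow i p hp.pos
    omega
  -- the maps
  set η : F → F × F := fun x => (ω * x ^ q + ω ^ 2 * x, ω ^ 2 * x ^ q + ω * x) with hηdef
  set ρ : F × F → F := fun a => β⁻¹ * (-(ω ^ (2 * N + 1)) * a.1 + ω ^ (2 * N) * a.2) with hρdef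
  -- factor lemmas
  have hpowmul : ∀ T : ℕ, ∀ x : F, (x ^ (q - 1)) ^ T * x ^ T = (x ^ q) ^ T := by
    intro T x
    rw [← pow_mul, ← pow_mul, ← pow_add]
    congr 1
    have : q - 1 + 1 = q := by omega
    calc (q - 1) * T + T = ((q - 1) + 1) * T := by ring
      _ = q * T := by rw [this]
  have hsplit1 : ∀ T : ℕ, (∃ i, T = p ^ i) → ∀ x : F,
      x ^ T * ((x ^ (q - 1)) ^ T + ω ^ T) = (x ^ q + ω * x) ^ T := by
    intro T hT x
    calc x ^ T * ((x ^ (q - 1)) ^ T + ω ^ T)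
        = (x ^ (q - 1)) ^ T * x ^ T + (ω * x) ^ T := by rw [mul_pow]; ring
      _ = (x ^ q) ^ T + (ω * x) ^ T := by rw [hpowmul]
      _ = (x ^ q + ω * x) ^ T := (hfrobT T hT _ _).symm
  have hsplit2 : ∀ T : ℕ, (∃ i, T = p ^ i) → ∀ x : F,
      x ^ T * (ω ^ T * (x ^ (q - 1)) ^ T + 1) = (ω * x ^ q + x) ^ T := by
    intro T hT x
    calc x ^ T * (ω ^ T * (x ^ (q - 1)) ^ T + 1)
        = ω ^ T * ((x ^ (q - 1)) ^ T * x ^ T) + x ^ T := by ring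
      _ = ω ^ T * (x ^ q) ^ T + x ^ T := by rw [hpowmul]
      _ = (ω * x ^ q) ^ T + x ^ T := by rw [mul_pow]
      _ = (ω * x ^ q + x) ^ T := (hfrobT T hT _ _).symm
  -- main identity
  have hmain : ∀ x : F, x ^ N * C₁.eval (x ^ (q - 1)) =
      -(ω ^ (2 * N + 1)) * (ω * x ^ q + ω ^ 2 * x) ^ N
        + ω ^ (2 * N) * (ω ^ 2 * x ^ q + ω * x) ^ N := by
    intro x
    have hev : C₁.eval (x ^ (q - 1)) =
        -ω * (((x ^ (q - 1)) ^ Q + ω ^ Q) * ((x ^ (q - 1)) ^ R + ω ^ R) *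
            ((x ^ (q - 1)) ^ S + ω ^ S))
          + (ω ^ Q * (x ^ (q - 1)) ^ Q + 1) * (ω ^ R * (x ^ (q - 1)) ^ R + 1) *
            (ω ^ S * (x ^ (q - 1)) ^ S + 1) := by
      simp [hC₁]
    have e1 : (x ^ q + ω * x : F) = ω ^ 2 * (ω * x ^ q + ω ^ 2 * x) := by
      linear_combination (-(x ^ q) - ω * x) * hω3
    have e2 : (ω * x ^ q + x : F) = ω ^ 2 * (ω ^ 2 * x ^ q + ω * x) := by
      linear_combination (-(ω * x ^ q) - x) * hω3
    calc x ^ N * C₁.eval (x ^ (q - 1))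
        = -ω * ((x ^ Q * ((x ^ (q - 1)) ^ Q + ω ^ Q)) *
              (x ^ R * ((x ^ (q - 1)) ^ R + ω ^ R)) *
              (x ^ S * ((x ^ (q - 1)) ^ S + ω ^ S)))
            + (x ^ Q * (ω ^ Q * (x ^ (q - 1)) ^ Q + 1)) *
              (x ^ R * (ω ^ R * (x ^ (q - 1)) ^ R + 1)) *
              (x ^ S * (ω ^ S * (x ^ (q - 1)) ^ S + 1)) := by
          rw [hev, hN, pow_add, pow_add]; ring
      _ = -ω * ((x ^ q + ω * x) ^ Q * (x ^ q + ω * x) ^ R * (x ^ q + ω * x) ^ S)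
            + (ω * x ^ q + x) ^ Q * (ω * x ^ q + x) ^ R * (ω * x ^ q + x) ^ S := by
          rw [hsplit1 Q hQ, hsplit1 R hR, hsplit1 S hS,
            hsplit2 Q hQ, hsplit2 R hR, hsplit2 S hS]
      _ = -ω * (x ^ q + ω * x) ^ N + (ω * x ^ q + x) ^ N := by
          rw [hN, pow_add, pow_add, pow_add, pow_add]
      _ = -ω * ((ω ^ 2) ^ N * (ω * x ^ q + ω ^ 2 * x) ^ N)
            + (ω ^ 2) ^ N * (ω ^ 2 * x ^ q + ω * x) ^ N := by
          rw [e1, e2, mul_pow, mul_pow]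
      _ = -(ω ^ (2 * N + 1)) * (ω * x ^ q + ω ^ 2 * x) ^ N
            + ω ^ (2 * N) * (ω ^ 2 * x ^ q + ω * x) ^ N := by
          rw [pow_succ, pow_mul]; ring
  -- η properties
  have hηinj : Function.Injective η := by
    intro x y hxy
    rw [hηdef, Prod.mk.injEq] at hxy
    obtain ⟨h1, h2⟩ := hxy
    have h3 : (ω - ω ^ 2) * x = (ω - ω ^ 2) * y := by
      linear_combination ω ^ 2 * h1 - ω * h2 - ω * (x - y) * hω3
    exact mul_left_cancel₀ hsub h3
  have hηfix : ∀ x : F, ((η x).1) ^ q = (η x).1 ∧ ((η x).2) ^ q = (η x).2 := by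
    intro x
    constructor
    · show (ω * x ^ q + ω ^ 2 * x) ^ q = _
      rw [hfrobq, mul_pow, mul_pow, hqq, hωq, hω2q]
      ring
    · show (ω ^ 2 * x ^ q + ω * x) ^ q = _
      rw [hfrobq, mul_pow, mul_pow, hqq, hωq, hω2q]
      ring
  have hηrange : Set.range η = {a : F × F | a.1 ^ q = a.1 ∧ a.2 ^ q = a.2} := by
    ext a
    constructor
    · rintro ⟨x, rfl⟩
      exact hηfix x
    · rintro ⟨ha, hb⟩
      obtain ⟨x, hxdef⟩ : ∃ x : F, x = (ω - ω ^ 2)⁻¹ * (ω ^ 2 * a.1 - ω * a.2) := ⟨_, rfl⟩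
      refine ⟨x, ?_⟩
      have hx1 : (ω - ω ^ 2) * x = ω ^ 2 * a.1 - ω * a.2 := by
        rw [hxdef]; exact mul_inv_cancel_left₀ hsub _
      have hconj : (ω - ω ^ 2) ^ q = -(ω - ω ^ 2) := by
        rw [hfrobsub, hωq, hω2q]; ring
      have e : ((ω - ω ^ 2) * x) ^ q = ω * a.1 - ω ^ 2 * a.2 := by
        rw [hx1, hfrobsub, mul_pow, mul_pow, hω2q, hωq, ha, hb]
      have e2 : ((ω - ω ^ 2) * x) ^ q = (ω - ω ^ 2) ^ q * x ^ q := mul_pow _ _ q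
      have hx2 : (ω - ω ^ 2) * x ^ q = -(ω * a.1 - ω ^ 2 * a.2) := by
        linear_combination -e + e2 + x ^ q * hconj
      have hcomp1 : ω * x ^ q + ω ^ 2 * x = a.1 := by
        have h : (ω - ω ^ 2) * (ω * x ^ q + ω ^ 2 * x) = (ω - ω ^ 2) * a.1 := by
          linear_combination ω * hx2 + ω ^ 2 * hx1 + ω * a.1 * hω3
        exact mul_left_cancel₀ hsub h
      have hcomp2 : ω ^ 2 * x ^ q + ω * x = a.2 := by
        have h : (ω - ω ^ 2) * (ω ^ 2 * x ^ q + ω * x) = (ω - ω ^ 2) * a.2 := by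
          linear_combination ω ^ 2 * hx2 + ω * hx1 + ω * a.2 * hω3
        exact mul_left_cancel₀ hsub h
      rw [hηdef]
      exact Prod.ext hcomp1 hcomp2
  have hηadd : ∀ x y : F, η (x + y) = η x + η y := by
    intro x y
    rw [hηdef]
    simp only [Prod.mk_add_mk, Prod.mk.injEq]
    rw [hfrobq]
    constructor <;> ring
  have hηsmul : ∀ c x : F, c ^ q = c → η (c * x) = (c * (η x).1, c * (η x).2) := by
    intro c x hc
    rw [hηdef]
    simp only [Prod.mk.injEq]
    rw [mul_pow, hc]
    constructor <;> ring
  -- ρ properties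
  have hρadd : ∀ a b : F × F, ρ (a + b) = ρ a + ρ b := by
    intro a b
    rw [hρdef]
    simp only [Prod.fst_add, Prod.snd_add]
    ring
  have hρsmul : ∀ (c : F) (a : F × F), c ^ q = c → ρ (c * a.1, c * a.2) = c * ρ a := by
    intro c a _
    rw [hρdef]
    simp only
    ring
  have hρbij : Set.BijOn ρ {a : F × F | a.1 ^ q = a.1 ∧ a.2 ^ q = a.2} Set.univ := by
    refine ⟨fun _ _ => trivial, ?_, ?_⟩
    · intro a ha b hb hab
      obtain ⟨ha1, ha2⟩ := ha
      obtain ⟨hb1, hb2⟩ := hb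
      rw [hρdef] at hab
      simp only at hab
      have h := mul_left_cancel₀ (inv_ne_zero hβne) hab
      have h2 : ω ^ (2 * N) * (ω * (a.1 - b.1)) = ω ^ (2 * N) * (a.2 - b.2) := by
        linear_combination -h
      have hrel : ω * (a.1 - b.1) = a.2 - b.2 :=
        mul_left_cancel₀ (pow_ne_zero _ hω0) h2
      have hd1 : (a.1 - b.1) ^ q = a.1 - b.1 := by rw [hfrobsub, ha1, hb1]
      have hd2 : (a.2 - b.2) ^ q = a.2 - b.2 := by rw [hfrobsub, ha2, hb2]
      have hrelq : ω ^ 2 * (a.1 - b.1) = a.2 - b.2 := by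
        have := congrArg (· ^ q) hrel
        simp only [mul_pow] at this
        rwa [hωq, hd1, hd2] at this
      have hzero : (ω ^ 2 - ω) * (a.1 - b.1) = 0 := by
        linear_combination hrelq - hrel
      have h1 : a.1 = b.1 := by
        rcases mul_eq_zero.mp hzero with h' | h'
        · exact absurd h' hsub'
        · exact sub_eq_zero.mp h'
      have h2' : a.2 = b.2 := by
        have : a.2 - b.2 = 0 := by
          rw [← hrel, h1]; ring
        exact sub_eq_zero.mp this
      exact Prod.ext h1 h2'
    · intro z _
      obtain ⟨w, hwdef⟩ : ∃ w : F, w = ω ^ (4 * N) * (β * z) := ⟨_, rfl⟩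
      obtain ⟨a, hadef⟩ : ∃ a : F, a = (ω ^ 2 - ω)⁻¹ * (w - w ^ q) := ⟨_, rfl⟩
      obtain ⟨b, hbdef⟩ : ∃ b : F, b = w + ω * a := ⟨_, rfl⟩
      have hconj : (ω ^ 2 - ω) ^ q = -(ω ^ 2 - ω) := by
        rw [hfrobsub, hωq, hω2q]; ring
      have hA : (ω ^ 2 - ω) * a = w - w ^ q := by
        rw [hadef]; exact mul_inv_cancel_left₀ hsub' _
      have eA : ((ω ^ 2 - ω) * a) ^ q = w ^ q - w := by
        rw [hA, hfrobsub, hqq]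
      have eA2 : ((ω ^ 2 - ω) * a) ^ q = (ω ^ 2 - ω) ^ q * a ^ q := mul_pow _ _ q
      have haq : a ^ q = a := by
        have h : -(ω ^ 2 - ω) * a ^ q = w ^ q - w := by
          linear_combination eA - eA2 - a ^ q * hconj
        have h2 : (ω ^ 2 - ω) * a ^ q = (ω ^ 2 - ω) * a := by
          linear_combination -h - hA
        exact mul_left_cancel₀ hsub' h2
      have hbq : b ^ q = b := by
        have e : b ^ q = w ^ q + ω ^ 2 * a := by
          rw [hbdef, hfrobq, mul_pow, hωq, haq]
        rw [e, hbdef]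
        linear_combination hA
      refine ⟨(a, b), ⟨haq, hbq⟩, ?_⟩
      have h6 : ω ^ (6 * N) = 1 := by
        rw [show 6 * N = 3 * (2 * N) by ring, pow_mul, hω3, one_pow]
      show β⁻¹ * (-(ω ^ (2 * N + 1)) * a + ω ^ (2 * N) * b) = z
      rw [hbdef, hwdef]
      linear_combination β⁻¹ * β * z * h6 + z * inv_mul_cancel₀ hβne
  -- the pointwise identity
  have hpoint : ∀ x : F,
      x ^ N * (β⁻¹ * C₁.eval (x ^ (q - 1))) =
        ρ ((η x).1 ^ N, (η x).2 ^ N) := by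
    intro x
    show _ = β⁻¹ * (-(ω ^ (2 * N + 1)) * (ω * x ^ q + ω ^ 2 * x) ^ N
      + ω ^ (2 * N) * (ω ^ 2 * x ^ q + ω * x) ^ N)
    linear_combination β⁻¹ * hmain x
  refine ⟨⟨η, ρ, hηinj, hηrange, hηadd, hηsmul, hρbij, hρadd, hρsmul, hpoint⟩, ?_⟩
  -- part 2
  set Kset : Set (F × F) := {a : F × F | a.1 ^ q = a.1 ∧ a.2 ^ q = a.2} with hKdef
  set g : F × F → F × F := fun a => (a.1 ^ N, a.2 ^ N) with hgdef
  have hfeq : (fun x : F => x ^ N * (β⁻¹ * C₁.eval (x ^ (q - 1)))) = ρ ∘ g ∘ η := by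
    funext x
    exact hpoint x
  have hηbij : Set.BijOn η Set.univ Kset := by
    refine ⟨fun x _ => ?_, hηinj.injOn, fun a ha => ?_⟩
    · exact hηrange ▸ Set.mem_range_self x
    · rw [← Set.image_univ] at hηrange
      rw [← hηrange] at ha
      exact ha
  constructor
  · -- bijective → gcd = 1
    intro hbij
    by_contra hne
    set d := Nat.gcd N (q - 1) with hddef
    have hdpos : 0 < d := Nat.gcd_pos_of_pos_left _ hNpos
    have hd2 : 2 ≤ d := by omega
    have hdvdN : d ∣ N := Nat.gcd_dvd_left _ _
    have hdvdq : d ∣ q - 1 := Nat.gcd_dvd_right _ _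
    have hq21 : q - 1 ∣ q ^ 2 - 1 := by
      simpa using Nat.sub_dvd_pow_sub_pow q 1 2
    have hdq2 : d ∣ q ^ 2 - 1 := hdvdq.trans hq21
    have hq2pos : 0 < q ^ 2 - 1 := by
      have h4 : 2 * 2 ≤ q * q := Nat.mul_le_mul hq2 hq2
      have hsq : q ^ 2 = q * q := sq q
      omega
    have hcardU : Fintype.card Fˣ = q ^ 2 - 1 := by
      rw [Fintype.card_units, hF]
    obtain ⟨ζ, hζ⟩ := IsCyclic.exists_generator (α := Fˣ)
    have hζord : orderOf ζ = q ^ 2 - 1 := by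
      rw [orderOf_eq_card_of_forall_mem_zpowers hζ, Nat.card_eq_fintype_card, hcardU]
    set m := (q ^ 2 - 1) / d with hmdef
    have hmdvd : m ∣ q ^ 2 - 1 := Nat.div_dvd_of_dvd hdq2
    set c := ζ ^ m with hcdef
    have hcord : orderOf c = d := by
      rw [hcdef, orderOf_pow, hζord, Nat.gcd_eq_right hmdvd, hmdef,
        Nat.div_div_self hdq2 (by omega)]
    have hc1 : c ≠ 1 := by
      intro h
      rw [h, orderOf_one] at hcord
      omega
    have hcq1 : c ^ (q - 1) = 1 := orderOf_dvd_iff_pow_eq_one.mp (hcord ▸ hdvdq)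
    have hcN1 : c ^ N = 1 := orderOf_dvd_iff_pow_eq_one.mp (hcord ▸ hdvdN)
    set cF := (c : F) with hcFdef
    have hcF1 : cF ≠ 1 := fun h => hc1 (Units.ext h)
    have hcFq1 : cF ^ (q - 1) = 1 := by
      rw [hcFdef, ← Units.val_pow_eq_pow_val, hcq1, Units.val_one]
    have hcFN : cF ^ N = 1 := by
      rw [hcFdef, ← Units.val_pow_eq_pow_val, hcN1, Units.val_one]
    have hcFq : cF ^ q = cF := by
      rw [show q = (q - 1) + 1 by omega, pow_succ, hcFq1, one_mul]
    have hmem1 : (cF, (1 : F)) ∈ Kset := ⟨hcFq, one_pow q⟩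
    have hmem2 : ((1 : F), (1 : F)) ∈ Kset := ⟨one_pow q, one_pow q⟩
    obtain ⟨x₁, hx₁⟩ : (cF, (1 : F)) ∈ Set.range η := hηrange ▸ hmem1
    obtain ⟨x₂, hx₂⟩ : ((1 : F), (1 : F)) ∈ Set.range η := hηrange ▸ hmem2
    have hx12 : x₁ ≠ x₂ := by
      intro h
      rw [h, hx₂] at hx₁
      exact hcF1 (congrArg Prod.fst hx₁).symm
    have hfx : x₁ ^ N * (β⁻¹ * C₁.eval (x₁ ^ (q - 1)))
        = x₂ ^ N * (β⁻¹ * C₁.eval (x₂ ^ (q - 1))) := by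
      rw [hpoint x₁, hpoint x₂, hx₁, hx₂]
      simp only
      rw [hcFN, one_pow]
    exact hx12 (hbij.injective hfx)
  · -- gcd = 1 → bijective
    intro hgcd
    obtain ⟨M, l, hMl⟩ : ∃ M l : ℕ, N * M = (q - 1) * l + 1 := by
      rcases Nat.lt_or_ge 1 (q - 1) with hq' | hq'
      · obtain ⟨M, -, hM⟩ := Nat.exists_mul_mod_eq_one_of_coprime hgcd hq'
        refine ⟨M, N * M / (q - 1), ?_⟩
        conv_lhs => rw [← Nat.div_add_mod (N * M) (q - 1)]
        rw [hM]
      · refine ⟨1, N - 1, ?_⟩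
        have h2 : q = 2 := by omega
        rw [h2]
        omega
    have hMpos : 0 < M := by
      rcases Nat.eq_zero_or_pos M with h | h
      · rw [h, Nat.mul_zero] at hMl; omega
      · exact h
    have hKinv : ∀ x : F, x ^ q = x → (x ^ N) ^ M = x ∧ (x ^ M) ^ N = x := by
      intro x hx
      by_cases hx0 : x = 0
      · subst hx0
        constructor <;> rw [zero_pow (by omega), zero_pow (by omega)]
      · have hx1 : x ^ (q - 1) = 1 := by
          have h : x ^ (q - 1) * x = 1 * x := by
            rw [← pow_succ, show q - 1 + 1 = q by omega, hx, one_mul]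
          exact mul_right_cancel₀ hx0 h
        have key : x ^ (N * M) = x := by
          rw [hMl, pow_add, pow_mul, hx1, one_pow, pow_one, one_mul]
        constructor
        · rw [← pow_mul]; exact key
        · rw [← pow_mul, mul_comm]; exact key
    have hgbij : Set.BijOn g Kset Kset := by
      refine ⟨?_, ?_, ?_⟩
      · rintro a ⟨h1, h2⟩
        constructor
        · show (a.1 ^ N) ^ q = a.1 ^ N
          rw [← pow_mul, mul_comm, pow_mul, h1]
        · show (a.2 ^ N) ^ q = a.2 ^ N
          rw [← pow_mul, mul_comm, pow_mul, h2]
      · rintro a ⟨ha1, ha2⟩ b ⟨hb1, hb2⟩ hab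
        rw [hgdef, Prod.mk.injEq] at hab
        obtain ⟨h1, h2⟩ := hab
        have e1 : a.1 = b.1 := by
          rw [← (hKinv a.1 ha1).1, ← (hKinv b.1 hb1).1, h1]
        have e2 : a.2 = b.2 := by
          rw [← (hKinv a.2 ha2).1, ← (hKinv b.2 hb2).1, h2]
        exact Prod.ext e1 e2
      · rintro a ⟨ha1, ha2⟩
        refine ⟨(a.1 ^ M, a.2 ^ M), ⟨?_, ?_⟩, ?_⟩
        · show (a.1 ^ M) ^ q = a.1 ^ M
          rw [← pow_mul, mul_comm, pow_mul, ha1]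
        · show (a.2 ^ M) ^ q = a.2 ^ M
          rw [← pow_mul, mul_comm, pow_mul, ha2]
        · show ((a.1 ^ M) ^ N, (a.2 ^ M) ^ N) = a
          rw [(hKinv a.1 ha1).2, (hKinv a.2 ha2).2]
    rw [hfeq, ← Set.bijOn_univ]
    exact (hρbij.comp hgbij).comp hηbij
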